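/- Define sequences q_t and r_t by q_1 = q_2 = 1/2, r_1 = 0, r_2 = 4√3/9, and for t ≥ 3: q_t = ((t-1)/(2^t - t - 1))·q_{t-1} and r_t = ((t-1)/((√3)^t - t - 1))·r_{t-1} + 2·(2^t/(t+1))^((t-1)/2)·q_{t-1}. Then for all positive integers t and n, c_t(n) ≥ q_t·2^n − r_t·(√3)^n. -/

import Mathlib

open scoped Classical

/-- `primeWeight t n` : sum over partitions of `n` into `t` distinct positive parts
`p 0 > p 1 > ⋯ > p (t-1) ≥ 1` of `(1/(t(t+1))) ∏_{i=1}^{t} ((i+1)/i)^{p_i}`. -/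
noncomputable def primeWeight (t n : ℕ) : ℝ :=
  ∑ p ∈ (Fintype.piFinset (fun _ : Fin t => Finset.range (n + 1))).filter
      (fun p => (∀ i j : Fin t, i < j → p j < p i) ∧ (∀ i, 1 ≤ p i) ∧
        ∑ i, p i = n),
    (1 / ((t : ℝ) * ((t : ℝ) + 1))) *
      ∏ i : Fin t, ((((i : ℕ) : ℝ) + 2) / (((i : ℕ) : ℝ) + 1)) ^ p i

/-- `qseq 1 = 1/2` and `qseq t = ((t-1)/(2^t - t - 1)) * qseq (t-1)` for `t ≥ 2`. -/
noncomputable def qseq : ℕ → ℝ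
  | 0 => 0
  | 1 => 1 / 2
  | t + 2 => (((t : ℝ) + 1) / (2 ^ (t + 2) - ((t : ℝ) + 2) - 1)) * qseq (t + 1)

/-- `rseq 1 = 0`, `rseq 2 = 4√3/9`, and for `t ≥ 3`,
`rseq t = ((t-1)/(√3^t - t - 1))·rseq (t-1) + 2·(2^t/(t+1))^((t-1)/2)·qseq (t-1)`. -/
noncomputable def rseq : ℕ → ℝ
  | 0 => 0
  | 1 => 0
  | 2 => 4 * Real.sqrt 3 / 9
  | t + 3 =>
      (((t : ℝ) + 2) / (Real.sqrt 3 ^ (t + 3) - ((t : ℝ) + 3) - 1)) * rseq (t + 2) +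
        2 * ((2 ^ (t + 3) : ℝ) / ((t : ℝ) + 4)) ^ ((((t : ℝ) + 3) - 1) / 2) * qseq (t + 2)

noncomputable def pwF (t n : ℕ) : Finset (Fin t → ℕ) :=
  (Fintype.piFinset (fun _ : Fin t => Finset.range (n + 1))).filter
      (fun p => (∀ i j : Fin t, i < j → p j < p i) ∧ (∀ i, 1 ≤ p i) ∧ ∑ i, p i = n)

noncomputable def pwW (t : ℕ) (p : Fin t → ℕ) : ℝ :=
  (1 / ((t : ℝ) * ((t : ℝ) + 1))) *
    ∏ i : Fin t, ((((i : ℕ) : ℝ) + 2) / (((i : ℕ) : ℝ) + 1)) ^ p i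

lemma primeWeight_eq (t n : ℕ) : primeWeight t n = ∑ p ∈ pwF t n, pwW t p := rfl

lemma pwW_nonneg (t : ℕ) (p : Fin t → ℕ) : 0 ≤ pwW t p := by
  apply mul_nonneg
  · positivity
  · exact Finset.prod_nonneg fun i _ => by positivity

lemma mem_pwF {t n : ℕ} {p : Fin t → ℕ} :
    p ∈ pwF t n ↔ (∀ i j : Fin t, i < j → p j < p i) ∧ (∀ i, 1 ≤ p i) ∧ ∑ i, p i = n := by
  simp only [pwF, Finset.mem_filter, Fintype.mem_piFinset, Finset.mem_range]
  constructor
  · rintro ⟨-, h⟩; exact h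
  · intro h
    refine ⟨fun i => ?_, h⟩
    have h1 : p i ≤ ∑ j, p j := Finset.single_le_sum (fun j _ => Nat.zero_le _) (Finset.mem_univ i)
    have h2 := h.2.2
    omega

lemma prod_ratio (t : ℕ) :
    ∏ i : Fin t, ((((i : ℕ) : ℝ) + 2) / (((i : ℕ) : ℝ) + 1)) = (t : ℝ) + 1 := by
  induction t with
  | zero => simp
  | succ u ih =>
    rw [Fin.prod_univ_castSucc]
    simp only [Fin.coe_castSucc, Fin.val_last]
    rw [ih]
    have h : ((u : ℝ) + 1) ≠ 0 := by positivity
    field_simp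
    push_cast
    ring

lemma key (s m : ℕ) (hm : 1 ≤ m) :
    primeWeight (s + 2) (m + (s + 2)) ≥
      ((s : ℝ) + 3) * primeWeight (s + 2) m + ((s : ℝ) + 1) * primeWeight (s + 1) m := by
  classical
  rw [primeWeight_eq, primeWeight_eq, primeWeight_eq]
  set φ1 : (Fin (s + 2) → ℕ) → (Fin (s + 2) → ℕ) := fun p i => p i + 1 with hφ1
  set φ2 : (Fin (s + 1) → ℕ) → (Fin (s + 2) → ℕ) :=
    fun q => Fin.snoc (fun i => q i + 1) 1 with hφ2
  -- subset 1
  have hsub1 : Finset.image φ1 (pwF (s + 2) m) ⊆ pwF (s + 2) (m + (s + 2)) := by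
    intro x hx
    obtain ⟨p, hp, rfl⟩ := Finset.mem_image.mp hx
    obtain ⟨hdec, hone, hsum⟩ := mem_pwF.mp hp
    refine mem_pwF.mpr ⟨fun i j hij => by simpa [φ1] using hdec i j hij,
      fun i => by simp [φ1], ?_⟩
    simp only [φ1]
    rw [Finset.sum_add_distrib, hsum]
    simp
  -- subset 2
  have hsub2 : Finset.image φ2 (pwF (s + 1) m) ⊆ pwF (s + 2) (m + (s + 2)) := by
    intro x hx
    obtain ⟨q, hq, rfl⟩ := Finset.mem_image.mp hx
    obtain ⟨hdec, hone, hsum⟩ := mem_pwF.mp hq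
    refine mem_pwF.mpr ⟨?_, ?_, ?_⟩
    · intro i j hij
      revert hij
      refine Fin.lastCases ?_ (fun j' => ?_) j
      · intro hij
        have hne : i ≠ Fin.last (s + 1) := Fin.ne_last_of_lt hij
        obtain ⟨i', rfl⟩ := Fin.exists_castSucc_eq.mpr hne
        simp only [φ2, Fin.snoc_last, Fin.snoc_castSucc]
        have := hone i'
        omega
      · intro hij
        have hne : i ≠ Fin.last (s + 1) := Fin.ne_last_of_lt (lt_of_lt_of_le hij (Fin.le_last _))
        obtain ⟨i', rfl⟩ := Fin.exists_castSucc_eq.mpr hne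
        simp only [φ2, Fin.snoc_castSucc]
        have : i' < j' := by
          rwa [Fin.castSucc_lt_castSucc_iff] at hij
        have := hdec i' j' this
        omega
    · intro i
      refine Fin.lastCases ?_ (fun i' => ?_) i
      · simp [φ2]
      · simp [φ2]
    · rw [Fin.sum_univ_castSucc]
      simp only [φ2, Fin.snoc_castSucc, Fin.snoc_last]
      rw [Finset.sum_add_distrib, hsum]
      simp
      omega
  -- disjoint
  have hdisj : Disjoint (Finset.image φ1 (pwF (s + 2) m)) (Finset.image φ2 (pwF (s + 1) m)) := by
    rw [Finset.disjoint_left]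
    intro x hx1 hx2
    obtain ⟨p, hp, rfl⟩ := Finset.mem_image.mp hx1
    obtain ⟨q, hq, heq⟩ := Finset.mem_image.mp hx2
    have h1 : φ1 p (Fin.last (s + 1)) = p (Fin.last (s + 1)) + 1 := rfl
    have h2 : φ2 q (Fin.last (s + 1)) = 1 := by simp [φ2]
    have := congrFun heq (Fin.last (s + 1))
    rw [h2] at this
    have := (mem_pwF.mp hp).2.1 (Fin.last (s + 1))
    simp only [φ1] at *
    omega
  -- sum over image 1
  have hsum1 : ∑ x ∈ Finset.image φ1 (pwF (s + 2) m), pwW (s + 2) x =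
      ((s : ℝ) + 3) * ∑ p ∈ pwF (s + 2) m, pwW (s + 2) p := by
    rw [Finset.sum_image (fun a _ b _ h => funext fun i => by
      have := congrFun h i; simpa [φ1] using this), Finset.mul_sum]
    apply Finset.sum_congr rfl
    intro p hp
    simp only [pwW, φ1, pow_succ]
    rw [Finset.prod_mul_distrib, prod_ratio]
    push_cast
    ring
  -- sum over image 2
  have hsum2 : ∑ x ∈ Finset.image φ2 (pwF (s + 1) m), pwW (s + 2) x =
      ((s : ℝ) + 1) * ∑ q ∈ pwF (s + 1) m, pwW (s + 1) q := by
    rw [Finset.sum_image (fun a _ b _ h => funext fun i => by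
      have := congrFun h (Fin.castSucc i); simpa [φ2, Fin.snoc_castSucc] using this),
      Finset.mul_sum]
    apply Finset.sum_congr rfl
    intro q hq
    simp only [pwW, φ2]
    rw [Fin.prod_univ_castSucc]
    simp only [Fin.snoc_castSucc, Fin.snoc_last, Fin.coe_castSucc, Fin.val_last, pow_one,
      pow_succ]
    rw [Finset.prod_mul_distrib, prod_ratio]
    have h1 : ((s : ℝ) + 1) ≠ 0 := by positivity
    have h2 : ((s : ℝ) + 2) ≠ 0 := by positivity
    have h3 : ((s : ℝ) + 3) ≠ 0 := by positivity
    push_cast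
    field_simp
    ring
  -- combine
  have hunion : Finset.image φ1 (pwF (s + 2) m) ∪ Finset.image φ2 (pwF (s + 1) m) ⊆
      pwF (s + 2) (m + (s + 2)) := Finset.union_subset hsub1 hsub2
  have hge : ∑ p ∈ pwF (s + 2) (m + (s + 2)), pwW (s + 2) p ≥
      ∑ p ∈ Finset.image φ1 (pwF (s + 2) m) ∪ Finset.image φ2 (pwF (s + 1) m), pwW (s + 2) p :=
    Finset.sum_le_sum_of_subset_of_nonneg hunion (fun x _ _ => pwW_nonneg _ _)
  rw [Finset.sum_union hdisj, hsum1, hsum2] at hge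
  exact hge

lemma nat_pow2 (u : ℕ) : u + 4 ≤ 2 ^ (u + 2) := by
  induction u with
  | zero => norm_num
  | succ v ih => rw [pow_succ]; omega

lemma real_pow2 (u : ℕ) : ((u : ℝ) + 4) ≤ 2 ^ (u + 2) := by
  have := nat_pow2 u
  calc ((u : ℝ) + 4) = ((u + 4 : ℕ) : ℝ) := by push_cast; ring
  _ ≤ ((2 ^ (u + 2) : ℕ) : ℝ) := by exact_mod_cast this
  _ = 2 ^ (u + 2) := by push_cast; ring

lemma qdenom_pos (u : ℕ) : (0 : ℝ) < 2 ^ (u + 2) - ((u : ℝ) + 2) - 1 := by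
  have := real_pow2 u
  linarith

lemma qseq_pos : ∀ s : ℕ, 0 < qseq (s + 1) := by
  intro s
  induction s with
  | zero => norm_num [qseq]
  | succ u ih =>
    show 0 < qseq (u + 2)
    rw [qseq]
    have h1 := qdenom_pos u
    have h2 : (0 : ℝ) < (u : ℝ) + 1 := by positivity
    positivity

lemma nat_pow3 (u : ℕ) : (u + 4) ^ 2 < 3 ^ (u + 3) := by
  induction u with
  | zero => norm_num
  | succ v ih =>
    have : (v + 5) ^ 2 ≤ 3 * (v + 4) ^ 2 := by zify; nlinarith [sq_nonneg ((v:ℤ) + 3), Int.natCast_nonneg v]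
    calc (v + 1 + 4) ^ 2 ≤ 3 * (v + 4) ^ 2 := this
    _ < 3 * 3 ^ (v + 3) := by omega
    _ = 3 ^ (v + 1 + 3) := by ring

lemma sqrt3_pow_gt (u : ℕ) : ((u : ℝ) + 4) < Real.sqrt 3 ^ (u + 3) := by
  have hsq : (Real.sqrt 3 ^ (u + 3)) ^ 2 = 3 ^ (u + 3) := by
    rw [← pow_mul, mul_comm (u + 3) 2, pow_mul, Real.sq_sqrt (by norm_num : (0:ℝ) ≤ 3)]
  apply lt_of_pow_lt_pow_left₀ 2 (by positivity)
  rw [hsq]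
  have := nat_pow3 u
  calc ((u : ℝ) + 4) ^ 2 = (((u + 4) ^ 2 : ℕ) : ℝ) := by push_cast; ring
  _ < ((3 ^ (u + 3) : ℕ) : ℝ) := by exact_mod_cast this
  _ = (3 : ℝ) ^ (u + 3) := by push_cast; ring

lemma rdenom_pos (u : ℕ) : (0 : ℝ) < Real.sqrt 3 ^ (u + 3) - ((u : ℝ) + 3) - 1 := by
  have := sqrt3_pow_gt u
  linarith

lemma rextra_nonneg (u : ℕ) :
    0 ≤ 2 * ((2 ^ (u + 3) : ℝ) / ((u : ℝ) + 4)) ^ ((((u : ℝ) + 3) - 1) / 2) * qseq (u + 2) := by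
  have hq := qseq_pos (u + 1)
  have hb : (0 : ℝ) ≤ (2 ^ (u + 3) : ℝ) / ((u : ℝ) + 4) := by positivity
  have := Real.rpow_nonneg hb ((((u : ℝ) + 3) - 1) / 2)
  positivity

lemma rseq_nonneg : ∀ t : ℕ, 0 ≤ rseq t := by
  intro t
  induction t using Nat.strong_induction_on with
  | _ t ih =>
    match t with
    | 0 => exact le_refl 0
    | 1 => exact le_refl 0
    | 2 =>
      rw [rseq]
      positivity
    | u + 3 =>
      rw [rseq]
      have h1 := rdenom_pos u
      have h2 := ih (u + 2) (by omega)
      have h3 := rextra_nonneg u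
      have h4 : 0 ≤ (((u : ℝ) + 2) / (Real.sqrt 3 ^ (u + 3) - ((u : ℝ) + 3) - 1)) * rseq (u + 2) := by
        apply mul_nonneg (by positivity) h2
      linarith

lemma qrec (s : ℕ) :
    (2 : ℝ) ^ (s + 2) * qseq (s + 2) = ((s : ℝ) + 3) * qseq (s + 2) + ((s : ℝ) + 1) * qseq (s + 1) := by
  have hD := qdenom_pos s
  rw [qseq]
  field_simp
  ring

lemma rrec (s : ℕ) :
    Real.sqrt 3 ^ (s + 2) * rseq (s + 2) ≥ ((s : ℝ) + 3) * rseq (s + 2) + ((s : ℝ) + 1) * rseq (s + 1) := by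
  match s with
  | 0 =>
    have h3 : Real.sqrt 3 ^ 2 = 3 := Real.sq_sqrt (by norm_num)
    rw [show rseq 1 = 0 from rfl, h3]
    ring_nf
    linarith []
  | u + 1 =>
    have hD := rdenom_pos u
    have hE := rextra_nonneg u
    rw [show u + 1 + 2 = u + 3 from rfl, rseq]
    set r' := rseq (u + 2)
    set E := 2 * ((2 ^ (u + 3) : ℝ) / ((u : ℝ) + 4)) ^ ((((u : ℝ) + 3) - 1) / 2) * qseq (u + 2) with hEdef
    set D := Real.sqrt 3 ^ (u + 3) - ((u : ℝ) + 3) - 1 with hDdef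
    have key : Real.sqrt 3 ^ (u + 3) * (((u : ℝ) + 2) / D * r' + E) -
        ((((u : ℝ) + 1) + 3) * (((u : ℝ) + 2) / D * r' + E) + (((u : ℝ) + 1) + 1) * r') = D * E := by
      field_simp
      ring
    push_cast
    push_cast at key
    nlinarith [mul_nonneg (le_of_lt hD) hE]

lemma sqrt3_le_two : Real.sqrt 3 ≤ 2 := by
  nlinarith [Real.sq_sqrt (show (0:ℝ) ≤ 3 by norm_num), Real.sqrt_nonneg 3]

lemma master (s : ℕ) : qseq (s + 2) * 2 ^ (s + 2) ≤ rseq (s + 2) * Real.sqrt 3 ^ (s + 2) := by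
  match s with
  | 0 =>
    have h2 : Real.sqrt 3 ^ 2 = 3 := Real.sq_sqrt (by norm_num)
    have hq2 : qseq 2 = 1 / 2 := by
      rw [qseq, show qseq 1 = 1/2 from rfl]; norm_num
    rw [hq2, show rseq 2 = 4 * Real.sqrt 3 / 9 from rfl, h2]
    nlinarith [Real.sq_sqrt (show (0:ℝ) ≤ 3 by norm_num), Real.sqrt_nonneg 3]
  | u + 1 =>
    have hq : (0:ℝ) < qseq (u + 2) := qseq_pos (u + 1)
    have hC : ((u:ℝ) + 4) < Real.sqrt 3 ^ (u + 3) := sqrt3_pow_gt u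
    have hC0 : (0:ℝ) ≤ Real.sqrt 3 ^ (u + 3) := by positivity
    -- the rpow factor is ≥ 1
    have hB : (1:ℝ) ≤ (2 ^ (u + 3) : ℝ) / ((u : ℝ) + 4) := by
      rw [le_div_iff₀ (by positivity)]
      have := real_pow2 u
      have h23 : (2:ℝ) ^ (u + 3) = 2 * 2 ^ (u + 2) := by ring
      nlinarith
    have ha : (1:ℝ) ≤ ((2 ^ (u + 3) : ℝ) / ((u : ℝ) + 4)) ^ ((((u : ℝ) + 3) - 1) / 2) :=
      Real.one_le_rpow hB
        (by have : (0:ℝ) ≤ (u:ℝ) := Nat.cast_nonneg u; linarith)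
    -- rseq (u+3) ≥ E
    have hr1 : 0 ≤ (((u : ℝ) + 2) / (Real.sqrt 3 ^ (u + 3) - ((u : ℝ) + 3) - 1)) * rseq (u + 2) :=
      mul_nonneg (div_nonneg (by positivity) (le_of_lt (rdenom_pos u))) (rseq_nonneg (u + 2))
    -- qseq equation for u+3
    have hD : (0:ℝ) < 2 ^ (u + 3) - ((u : ℝ) + 3) - 1 := by
      have := qdenom_pos (u + 1)
      push_cast at this ⊢
      convert this using 2 <;> ring_nf
    have hqe : qseq (u + 3) = (((u:ℝ) + 2) / (2 ^ (u + 3) - ((u : ℝ) + 3) - 1)) * qseq (u + 2) := by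
      rw [show u + 3 = (u + 1) + 2 from rfl, qseq]
      push_cast
      ring_nf
    have hD2 : (2:ℝ) ^ (u + 2) ≤ 2 ^ (u + 3) - ((u : ℝ) + 3) - 1 := by
      have := real_pow2 u
      have h23 : (2:ℝ) ^ (u + 3) = 2 * 2 ^ (u + 2) := by ring
      nlinarith
    -- main estimate : qseq (u+3) * 2^(u+3) ≤ E * √3^(u+3)
    have hmain : qseq (u + 3) * 2 ^ (u + 3) ≤
        2 * ((2 ^ (u + 3) : ℝ) / ((u : ℝ) + 4)) ^ ((((u : ℝ) + 3) - 1) / 2) * qseq (u + 2) *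
          Real.sqrt 3 ^ (u + 3) := by
      rw [hqe, div_mul_eq_mul_div, div_mul_eq_mul_div, div_le_iff₀ hD]
      have h5 : ((u:ℝ) + 2) * 2 ^ (u + 2) ≤
          Real.sqrt 3 ^ (u + 3) * (2 ^ (u + 3) - ((u : ℝ) + 3) - 1) :=
        mul_le_mul (by linarith) hD2 (by positivity) hC0
      set a := ((2 ^ (u + 3) : ℝ) / ((u : ℝ) + 4)) ^ ((((u : ℝ) + 3) - 1) / 2) with hadef
      have h6 : Real.sqrt 3 ^ (u + 3) * (2 ^ (u + 3) - ((u : ℝ) + 3) - 1) ≤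
          a * (Real.sqrt 3 ^ (u + 3) * (2 ^ (u + 3) - ((u : ℝ) + 3) - 1)) :=
        le_mul_of_one_le_left (mul_nonneg hC0 (by linarith)) ha
      have h7 := mul_le_mul_of_nonneg_left (h5.trans h6) hq.le
      have h8 : ((u:ℝ) + 2) * qseq (u + 2) * 2 ^ (u + 3) =
          2 * (qseq (u + 2) * (((u:ℝ) + 2) * 2 ^ (u + 2))) := by
        rw [show (2:ℝ) ^ (u + 3) = 2 * 2 ^ (u + 2) from by ring]; ring
      linarith
    calc qseq (u + 3) * 2 ^ (u + 3) ≤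
        2 * ((2 ^ (u + 3) : ℝ) / ((u : ℝ) + 4)) ^ ((((u : ℝ) + 3) - 1) / 2) * qseq (u + 2) *
          Real.sqrt 3 ^ (u + 3) := hmain
    _ ≤ rseq (u + 3) * Real.sqrt 3 ^ (u + 3) := by
        apply mul_le_mul_of_nonneg_right _ hC0
        rw [rseq]
        linarith
    _ = rseq (u + 1 + 2) * Real.sqrt 3 ^ (u + 1 + 2) := rfl

lemma base_ineq (s n : ℕ) (h1 : 1 ≤ n) (h2 : n ≤ s + 2) :
    qseq (s + 2) * 2 ^ n ≤ rseq (s + 2) * Real.sqrt 3 ^ n := by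
  obtain ⟨k, hk⟩ : ∃ k, s + 2 = n + k := ⟨s + 2 - n, by omega⟩
  have hm := master s
  rw [hk] at hm ⊢
  rw [pow_add, pow_add] at hm
  have hqnk : (0:ℝ) < qseq (n + k) := hk ▸ qseq_pos (s + 1)
  have hle : Real.sqrt 3 ^ k ≤ 2 ^ k := pow_le_pow_left₀ (Real.sqrt_nonneg 3) sqrt3_le_two k
  have hs3 : (0:ℝ) < Real.sqrt 3 ^ k := by
    apply pow_pos (Real.sqrt_pos.mpr (by norm_num))
  have hchain : qseq (n + k) * 2 ^ n * Real.sqrt 3 ^ k ≤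
      rseq (n + k) * Real.sqrt 3 ^ n * Real.sqrt 3 ^ k := by
    calc qseq (n + k) * 2 ^ n * Real.sqrt 3 ^ k ≤ qseq (n + k) * 2 ^ n * 2 ^ k := by
          apply mul_le_mul_of_nonneg_left hle (by positivity)
    _ = qseq (n + k) * (2 ^ n * 2 ^ k) := by ring
    _ ≤ rseq (n + k) * (Real.sqrt 3 ^ n * Real.sqrt 3 ^ k) := hm
    _ = rseq (n + k) * Real.sqrt 3 ^ n * Real.sqrt 3 ^ k := by ring
  exact le_of_mul_le_mul_right hchain hs3

lemma primeWeight_nonneg (t n : ℕ) : 0 ≤ primeWeight t n := by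
  apply Finset.sum_nonneg
  intro p hp
  apply mul_nonneg
  · positivity
  · apply Finset.prod_nonneg
    intro i _
    positivity

lemma primeWeight_one (n : ℕ) (hn : 1 ≤ n) : primeWeight 1 n = 2 ^ n / 2 := by
  unfold primeWeight
  have hfilter : (Fintype.piFinset (fun _ : Fin 1 => Finset.range (n + 1))).filter
      (fun p => (∀ i j : Fin 1, i < j → p j < p i) ∧ (∀ i, 1 ≤ p i) ∧
        ∑ i, p i = n) = {fun _ => n} := by
    ext p
    simp only [Finset.mem_filter, Fintype.mem_piFinset, Finset.mem_range,
      Finset.mem_singleton, Fin.sum_univ_one]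
    constructor
    · rintro ⟨-, -, -, hs⟩
      funext i
      have : i = 0 := Subsingleton.elim i 0
      rw [this, hs]
    · rintro rfl
      exact ⟨fun i => Nat.lt_succ_self n, fun i j hij => absurd hij (by omega), fun i => hn, rfl⟩
  rw [hfilter, Finset.sum_singleton, Fin.prod_univ_one]
  norm_num
  ring

lemma main (s : ℕ) : ∀ n, 1 ≤ n →
    primeWeight (s + 1) n ≥ qseq (s + 1) * 2 ^ n - rseq (s + 1) * Real.sqrt 3 ^ n := by
  induction s with
  | zero =>
    intro n hn
    rw [primeWeight_one n hn, show qseq 1 = 1/2 from rfl, show rseq 1 = 0 from rfl]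
    ring_nf
    linarith [le_refl ((2:ℝ) ^ n)]
  | succ u ih =>
    intro n
    induction n using Nat.strong_induction_on with
    | _ n ihn =>
      intro hn
      by_cases hc : n ≤ u + 2
      · have hb := base_ineq u n hn hc
        have h0 := primeWeight_nonneg (u + 2) n
        show primeWeight (u + 2) n ≥ qseq (u + 2) * 2 ^ n - rseq (u + 2) * Real.sqrt 3 ^ n
        linarith
      · obtain ⟨m, hm1, rfl⟩ : ∃ m, 1 ≤ m ∧ n = m + (u + 2) := ⟨n - (u + 2), by omega, by omega⟩
        have hk := key u m hm1
        have h1 : primeWeight (u + 2) m ≥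
            qseq (u + 2) * 2 ^ m - rseq (u + 2) * Real.sqrt 3 ^ m := ihn m (by omega) hm1
        have h2 := ih m hm1
        have hq := qrec u
        have hr := rrec u
        have hs3 : (0:ℝ) ≤ Real.sqrt 3 ^ m := by positivity
        show primeWeight (u + 2) (m + (u + 2)) ≥
          qseq (u + 2) * 2 ^ (m + (u + 2)) - rseq (u + 2) * Real.sqrt 3 ^ (m + (u + 2))
        rw [pow_add (2:ℝ) m (u+2), pow_add (Real.sqrt 3) m (u+2)]
        have e1 : qseq (u + 2) * (2 ^ m * 2 ^ (u + 2)) =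
            (((u:ℝ) + 3) * qseq (u + 2) + ((u:ℝ) + 1) * qseq (u + 1)) * 2 ^ m := by
          rw [← hq]; ring
        have e2 : (((u:ℝ) + 3) * rseq (u + 2) + ((u:ℝ) + 1) * rseq (u + 1)) * Real.sqrt 3 ^ m ≤
            rseq (u + 2) * (Real.sqrt 3 ^ m * Real.sqrt 3 ^ (u + 2)) := by
          have := mul_le_mul_of_nonneg_right hr hs3
          nlinarith [this]
        have hA := mul_le_mul_of_nonneg_left h1 (show (0:ℝ) ≤ (u:ℝ) + 3 by positivity)
        have hB := mul_le_mul_of_nonneg_left h2 (show (0:ℝ) ≤ (u:ℝ) + 1 by positivity)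
        rw [ge_iff_le] at hk
        linarith [hk, hA, hB, e1, e2]

theorem stmt_10 (t n : ℕ) (ht : 1 ≤ t) (hn : 1 ≤ n) :
    primeWeight t n ≥ qseq t * 2 ^ n - rseq t * Real.sqrt 3 ^ n := by
  obtain ⟨s, rfl⟩ : ∃ s, t = s + 1 := ⟨t - 1, by omega⟩
  exact main s n hn
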